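/- If an infinite connected graph G with bounded degree has exactly one end and admits a sequence of pairwise disjoint finite cut-sets of uniformly bounded size separating a fixed root from infinity, then p_c(G) = 1 for Bernoulli site percolation. -/

import Mathlib

open MeasureTheory

/-- The subgraph of `G` spanned by open vertices in configuration `ω`. -/
def percSubgraph {V : Type*} (G : SimpleGraph V) (ω : V → Bool) : SimpleGraph V where
  Adj a b := G.Adj a b ∧ ω a = true ∧ ω b = true
  symm := ⟨fun a b ⟨h, ha, hb⟩ => ⟨h.symm, hb, ha⟩⟩
  loopless := ⟨fun a ⟨h, _, _⟩ => G.ne_of_adj h rfl⟩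

/-- The open cluster of `v`: vertices reachable from `v` in the open subgraph
(empty if `v` is closed). -/
def openCluster {V : Type*} (G : SimpleGraph V) (ω : V → Bool) (v : V) : Set V :=
  {w | ω v = true ∧ (percSubgraph G ω).Reachable v w}

/-- `μ` is Bernoulli(p) site percolation: cylinder events have product probabilities. -/
def IsBernoulli {V : Type*} (μ : Measure (V → Bool)) (p : ℝ) : Prop :=
  ∀ (S : Finset V) (g : V → Bool),
    μ {ω | ∀ v ∈ S, ω v = g v} = ∏ v ∈ S, ENNReal.ofReal (if g v = true then p else 1 - p)

/-- Vertices of the canopy tree: at level `n`, the binary tree of depth `n`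
(vertices = binary strings of length ≤ n) attached at the ray vertex `⟨n, []⟩`. -/
abbrev CanopyV : Type := Σ n : ℕ, {l : List Bool // l.length ≤ n}

/-- The canopy tree: the infinite ray `v_n = ⟨n, []⟩`, with a complete binary
tree of depth `n` rooted at `v_n`. -/
def canopyTree : SimpleGraph CanopyV where
  Adj a b :=
    (a.1 = b.1 ∧ ∃ x, b.2.val = a.2.val ++ [x] ∨ a.2.val = b.2.val ++ [x])
    ∨ (a.2.val = [] ∧ b.2.val = [] ∧ (a.1 = b.1 + 1 ∨ b.1 = a.1 + 1))
  symm := by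
    constructor
    rintro a b (⟨h1, x, h2⟩ | ⟨h1, h2, h3⟩)
    · exact Or.inl ⟨h1.symm, x, h2.symm⟩
    · exact Or.inr ⟨h2, h1, h3.symm⟩
  loopless := by
    constructor
    rintro a (⟨_, x, h | h⟩ | ⟨_, _, h | h⟩) <;> first | simp at h | omega

/-- The Cartesian product of a graph with the bi-infinite line `ℤ`. -/
def prodZ {V : Type*} (G : SimpleGraph V) : SimpleGraph (V × ℤ) where
  Adj a b := (a.1 = b.1 ∧ (a.2 = b.2 + 1 ∨ b.2 = a.2 + 1)) ∨ (G.Adj a.1 b.1 ∧ a.2 = b.2)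
  symm := by
    constructor
    rintro a b (⟨h1, h2⟩ | ⟨h1, h2⟩)
    · exact Or.inl ⟨h1.symm, h2.symm⟩
    · exact Or.inr ⟨h1.symm, h2.symm⟩
  loopless := by
    constructor
    rintro a (⟨_, h | h⟩ | ⟨h, _⟩)
    · omega
    · omega
    · exact G.ne_of_adj h rfl

section Helpers
open SimpleGraph

lemma myGetVert_mem_support {V : Type*} {G : SimpleGraph V} {u w : V} (p : G.Walk u w) (i : ℕ) :
    p.getVert i ∈ p.support := by
  induction p generalizing i with
  | nil => simp [SimpleGraph.Walk.getVert]
  | cons h q ih =>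
    cases i with
    | zero => simp [SimpleGraph.Walk.getVert]
    | succ i => rw [SimpleGraph.Walk.support_cons]; exact List.mem_cons_of_mem _ (ih i)

lemma myGetVert_injOn {V : Type*} {G : SimpleGraph V} {u w : V} {p : G.Walk u w}
    (hp : p.IsPath) : Set.InjOn p.getVert {i | i ≤ p.length} := by
  induction p with
  | nil => intro i hi j hj _; simp only [Set.mem_setOf_eq, SimpleGraph.Walk.length_nil,
      Nat.le_zero] at hi hj; omega
  | cons h q ih =>
    rw [SimpleGraph.Walk.cons_isPath_iff] at hp
    intro i hi j hj hij
    simp only [Set.mem_setOf_eq, SimpleGraph.Walk.length_cons] at hi hj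
    cases i with
    | zero =>
      cases j with
      | zero => rfl
      | succ j =>
        exfalso
        rw [SimpleGraph.Walk.getVert_zero, SimpleGraph.Walk.getVert_cons_succ] at hij
        exact hp.2 (hij ▸ myGetVert_mem_support q j)
    | succ i =>
      cases j with
      | zero =>
        exfalso
        rw [SimpleGraph.Walk.getVert_zero, SimpleGraph.Walk.getVert_cons_succ] at hij
        exact hp.2 (hij ▸ myGetVert_mem_support q i)
      | succ j =>
        rw [SimpleGraph.Walk.getVert_cons_succ, SimpleGraph.Walk.getVert_cons_succ] at hij
        have := ih hp.1 (by omega : i ≤ q.length) (by omega : j ≤ q.length) hij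
        omega

def chainSet {V : Type*} (H : SimpleGraph V) (v : V) (n : ℕ) : Set (Fin (n + 1) → V) :=
  {f | f 0 = v ∧ ∀ k : Fin n, H.Adj (f k.castSucc) (f k.succ)}

lemma chainSet_finite {V : Type*} {H : SimpleGraph V}
    (hlf : ∀ w, (H.neighborSet w).Finite) (v : V) (n : ℕ) : (chainSet H v n).Finite := by
  induction n with
  | zero =>
    refine Set.Finite.subset (Set.finite_singleton (fun _ => v)) ?_
    intro f hf
    have : f = fun _ => v := by
      funext k
      have : k = 0 := Fin.ext (by omega)
      rw [this]; exact hf.1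
    simp [this]
  | succ n ih =>
    have hT : (⋃ g ∈ chainSet H v n, H.neighborSet (g (Fin.last n))).Finite :=
      Set.Finite.biUnion ih (fun g _ => hlf _)
    refine Set.Finite.subset (Set.Finite.image (fun gw : (Fin (n+1) → V) × V => Fin.snoc gw.1 gw.2)
      (Set.Finite.prod ih hT)) ?_
    intro f hf
    have hmem : Fin.init f ∈ chainSet H v n := by
      refine ⟨hf.1, fun k => ?_⟩
      exact hf.2 ⟨k.1, by omega⟩
    refine ⟨(Fin.init f, f (Fin.last (n+1))), ⟨hmem, ?_⟩, Fin.snoc_init_self f⟩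
    refine Set.mem_biUnion hmem ?_
    show H.Adj _ _
    exact hf.2 ⟨n, by omega⟩

lemma exists_long_chain {V : Type*} {H : SimpleGraph V}
    (hlf : ∀ w, (H.neighborSet w).Finite) (v : V)
    (hs : {w | H.Reachable v w}.Infinite) (n : ℕ) :
    ∃ f : Fin (n + 1) → V, f ∈ chainSet H v n ∧ Function.Injective f := by
  classical
  have hpath : ∃ (u : V) (q : H.Walk v u), q.IsPath ∧ n ≤ q.length := by
    by_contra hcon
    push_neg at hcon
    apply hs
    have hcover : {w | H.Reachable v w} ⊆
        ⋃ m ∈ Finset.range n, (fun f : Fin (m+1) → V => f (Fin.last m)) '' chainSet H v m := by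
      intro u hu
      obtain ⟨q⟩ := hu
      obtain ⟨r, hr⟩ := q.toPath
      have hlen : r.length < n := hcon u r hr
      refine Set.mem_biUnion (Finset.mem_range.2 hlen) ?_
      refine ⟨fun k : Fin (r.length + 1) => r.getVert k, ⟨r.getVert_zero, ?_⟩, ?_⟩
      · intro k
        exact r.adj_getVert_succ (by have := k.2; simpa using this)
      · show r.getVert (r.length) = u
        exact r.getVert_length
    exact Set.Finite.subset (Set.Finite.biUnion (Finset.range n).finite_toSet
      (fun m _ => Set.Finite.image _ (chainSet_finite hlf v m))) hcover
  obtain ⟨u, q, hq, hqn⟩ := hpath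
  refine ⟨fun k => q.getVert k, ⟨q.getVert_zero, fun k => q.adj_getVert_succ ?_⟩, ?_⟩
  · have := k.2; simp only [Fin.coe_castSucc]; omega
  · intro i j hij
    have := myGetVert_injOn hq (show (i : ℕ) ≤ q.length by have := i.2; omega)
      (show (j : ℕ) ≤ q.length by have := j.2; omega) hij
    exact Fin.ext this

open CategoryTheory Opposite in
lemma exists_ray {V : Type*} {H : SimpleGraph V}
    (hlf : ∀ w, (H.neighborSet w).Finite) (v : V)
    (hs : {w | H.Reachable v w}.Infinite) :
    ∃ f : ℕ → V, Function.Injective f ∧ f 0 = v ∧ ∀ k, H.Adj (f k) (f (k + 1)) := by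
  let F : ℕᵒᵖ ⥤ Type _ :=
    { obj := fun n => {f : Fin (n.unop + 1) → V // f ∈ chainSet H v n.unop ∧ Function.Injective f}
      map := fun {X Y} g => TypeCat.ofHom fun f =>
        ⟨f.1 ∘ Fin.castLE (Nat.succ_le_succ (leOfHom g.unop)),
          ⟨⟨f.2.1.1, fun k => f.2.1.2 ⟨k.1, by have h1 := k.2; have h2 := leOfHom g.unop; omega⟩⟩,
            f.2.2.comp (Fin.castLE_injective _)⟩⟩
      map_id := fun X => rfl
      map_comp := fun f g => rfl }
  have hfin : ∀ j : ℕᵒᵖ, Finite (F.obj j) := by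
    intro j
    have h1 : {f : Fin (j.unop + 1) → V | f ∈ chainSet H v j.unop ∧ Function.Injective f}.Finite :=
      (chainSet_finite hlf v j.unop).subset (fun f hf => hf.1)
    exact h1.to_subtype
  have hne : ∀ j : ℕᵒᵖ, Nonempty (F.obj j) := by
    intro j
    obtain ⟨f, hf, hinj⟩ := exists_long_chain hlf v hs j.unop
    exact ⟨⟨f, hf, hinj⟩⟩
  obtain ⟨g, hg⟩ := nonempty_sections_of_finite_inverse_system F
  have hcompat : ∀ (k m : ℕ) (h : k ≤ m) (i : Fin (k+1)),
      (g (op k)).1 i = (g (op m)).1 ⟨i.1, Nat.lt_succ_of_le (le_trans (Nat.lt_succ_iff.mp i.2) h)⟩ := by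
    intro k m h i
    have h2 : F.map (homOfLE h).op (g (op m)) = g (op k) := hg _
    rw [← h2]
    rfl
  refine ⟨fun k => (g (op k)).1 (Fin.last k), ?_, ?_, ?_⟩
  · intro j k hjk
    have hjk' : (g (op j)).1 (Fin.last j) = (g (op k)).1 (Fin.last k) := hjk
    rcases le_total j k with h | h
    · rw [hcompat j k h (Fin.last j)] at hjk'
      have := (g (op k)).2.2 hjk'
      have := congrArg Fin.val this
      simpa using this
    · rw [hcompat k j h (Fin.last k)] at hjk'
      have := (g (op j)).2.2 hjk'.symm
      have := congrArg Fin.val this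
      exact (by simpa using this : k = j).symm
  · exact (g (op 0)).2.1.1
  · intro k
    show H.Adj ((g (op k)).1 (Fin.last k)) ((g (op (k+1))).1 (Fin.last (k+1)))
    rw [hcompat k (k+1) (by omega) (Fin.last k)]
    exact (g (op (k+1))).2.1.2 ⟨k, Nat.lt_succ_self k⟩

end Helpers

/-- an infinite connected bounded-degree graph with exactly one end and a
sequence of pairwise disjoint finite cut-sets of uniformly bounded size separating a root
from infinity has `p_c = 1`. -/
theorem pc_eq_one_of_one_end_bounded_cutsets {V : Type*}
    (G : SimpleGraph V) (hinf : Infinite V) (hconn : G.Connected)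
    (D : ℕ) (hfin : ∀ v, (G.neighborSet v).Finite) (hdeg : ∀ v, (G.neighborSet v).ncard ≤ D)
    (hend : Nonempty G.end ∧ Subsingleton G.end)
    (o : V) (C : ℕ → Finset V) (hdisj : Pairwise fun m n => Disjoint (C m) (C n))
    (K : ℕ) (hK : ∀ n, (C n).card ≤ K)
    (hcut : ∀ n, ∀ f : ℕ → V, Function.Injective f → f 0 = o →
      (∀ k, G.Adj (f k) (f (k + 1))) → ∃ k, f k ∈ C n)
    (p : ℝ) (hp : p < 1)
    (μ : Measure (V → Bool)) [IsProbabilityMeasure μ] (hμ : IsBernoulli μ p) :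
    μ {ω | ∃ v, (openCluster G ω v).Infinite} = 0 := by
  classical
  set Fc : ℕ → Set (V → Bool) := fun n => {ω | ∀ v ∈ C n, ω v = false} with hFcdef
  have hmeas : ∀ n, MeasurableSet (Fc n) := by
    intro n
    have heq : Fc n = ⋂ v ∈ (C n : Set V), (fun ω : V → Bool => ω v) ⁻¹' {false} := by
      ext ω; simp [hFcdef]
    rw [heq]
    exact MeasurableSet.biInter ((C n : Set V).to_countable)
      (fun v _ => measurable_pi_apply v (measurableSet_singleton false))
  have hF : ∀ n, μ (Fc n) = ∏ _v ∈ C n, ENNReal.ofReal (1 - p) := by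
    intro n
    have := hμ (C n) (fun _ => false)
    simpa using this
  have hprod : ∀ s : Finset ℕ, μ (⋂ i ∈ s, Fc i) = ∏ i ∈ s, μ (Fc i) := by
    intro s
    have key : (⋂ i ∈ s, Fc i) = {ω : V → Bool | ∀ v ∈ s.biUnion C, ω v = (fun _ => false) v} := by
      ext ω
      simp only [Set.mem_iInter, hFcdef, Set.mem_setOf_eq, Finset.mem_biUnion]
      constructor
      · rintro h v ⟨i, hi, hvi⟩; exact h i hi v hvi
      · intro h i hi v hvi; exact h v ⟨i, hi, hvi⟩
    have hpd : (↑s : Set ℕ).PairwiseDisjoint C := fun i _ j _ hij => hdisj hij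
    rw [key, hμ (s.biUnion C) (fun _ => false), Finset.prod_biUnion hpd]
    simp [hF]
  have hindep : ProbabilityTheory.iIndepSet Fc μ :=
    (ProbabilityTheory.iIndepSet_iff_meas_biInter hmeas).2 hprod
  have hc : (0:ℝ) < 1 - p := by linarith
  set c := ENNReal.ofReal (1 - p) with hcdef
  have hc0 : c ≠ 0 := by simp [hcdef]; linarith
  have hεne : (min c 1) ^ K ≠ 0 := pow_ne_zero _ (lt_min (pos_iff_ne_zero.mpr hc0) zero_lt_one).ne'
  have hsum : ∑' n, μ (Fc n) = ⊤ := by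
    rw [eq_top_iff]
    have hlow : ∀ n, (min c 1) ^ K ≤ μ (Fc n) := by
      intro n
      rw [hF n, Finset.prod_const]
      calc (min c 1) ^ K ≤ (min c 1) ^ (C n).card :=
            pow_le_pow_of_le_one zero_le (min_le_right _ _) (hK n)
        _ ≤ c ^ (C n).card := pow_le_pow_left₀ zero_le (min_le_left _ _) _
    calc (⊤:ENNReal) = ∑' _ : ℕ, (min c 1) ^ K :=
          (ENNReal.tsum_const_eq_top_of_ne_zero hεne).symm
      _ ≤ ∑' n, μ (Fc n) := ENNReal.tsum_le_tsum hlow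
  have hBC : μ (Filter.limsup Fc Filter.atTop) = 1 :=
    ProbabilityTheory.measure_limsup_eq_one hmeas hindep hsum
  have hcompl : μ (Filter.limsup Fc Filter.atTop)ᶜ = 0 :=
    (prob_compl_eq_zero_iff (MeasurableSet.measurableSet_limsup hmeas)).2 hBC
  refine measure_mono_null ?_ hcompl
  intro ω hω
  simp only [Set.mem_compl_iff]
  intro hlim
  rw [Filter.limsup_eq_iInf_iSup_of_nat] at hlim
  simp only [Set.iInf_eq_iInter, Set.iSup_eq_iUnion, Set.mem_iInter, Set.mem_iUnion] at hlim
  obtain ⟨v, hv⟩ := hω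
  -- basic facts about the cluster
  have hvopen : ω v = true := by
    obtain ⟨w, hw⟩ := hv.nonempty
    exact hw.1
  have hreach : {w | (percSubgraph G ω).Reachable v w}.Infinite :=
    hv.mono (fun w hw => hw.2)
  have hlf : ∀ w, ((percSubgraph G ω).neighborSet w).Finite :=
    fun w => (hfin w).subset (fun u hu => (hu : G.Adj w u ∧ _).1)
  obtain ⟨f, hfinj, hf0, hfadj⟩ := exists_ray hlf v hreach
  have hopen : ∀ k, ω (f k) = true := by
    intro k
    cases k with
    | zero => rw [hf0]; exact hvopen
    | succ k => exact (hfadj k : G.Adj _ _ ∧ ω _ = true ∧ ω _ = true).2.2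
  -- path from o to v
  obtain ⟨P, hP⟩ := (hconn.preconnected o v).some.toPath
  -- last index where the ray meets P.support
  have hfinpre : {k : ℕ | f k ∈ P.support}.Finite := by
    have : {k : ℕ | f k ∈ P.support} = f ⁻¹' {x | x ∈ P.support} := rfl
    rw [this]
    exact Set.Finite.preimage (fun x _ y _ h => hfinj h) P.support.finite_toSet
  have hTne : hfinpre.toFinset.Nonempty := by
    refine ⟨0, ?_⟩
    rw [Set.Finite.mem_toFinset]
    show f 0 ∈ P.support
    rw [hf0]; exact P.end_mem_support
  set k₀ := hfinpre.toFinset.max' hTne with hk₀def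
  have hk₀mem : f k₀ ∈ P.support :=
    (Set.Finite.mem_toFinset hfinpre).1 (hfinpre.toFinset.max'_mem hTne)
  have hk₀max : ∀ k, f k ∈ P.support → k ≤ k₀ :=
    fun k hk => hfinpre.toFinset.le_max' k ((Set.Finite.mem_toFinset hfinpre).2 hk)
  set Q := P.takeUntil (f k₀) hk₀mem with hQdef
  have hQpath : Q.IsPath := hP.takeUntil hk₀mem
  have hQsup : ∀ x ∈ Q.support, x ∈ P.support :=
    fun x hx => P.support_takeUntil_subset hk₀mem hx
  set L := Q.length with hLdef
  set g : ℕ → V := fun k => if k ≤ L then Q.getVert k else f (k₀ + (k - L)) with hgdef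
  have hgl : ∀ k, k ≤ L → g k = Q.getVert k := fun k hk => if_pos hk
  have hgr : ∀ k, L < k → g k = f (k₀ + (k - L)) := fun k hk => if_neg (by omega)
  have hg0 : g 0 = o := by rw [hgl 0 (Nat.zero_le L)]; exact Q.getVert_zero
  have hgL : g L = f k₀ := by rw [hgl L le_rfl]; exact Q.getVert_length
  have hgadj : ∀ k, G.Adj (g k) (g (k + 1)) := by
    intro k
    rcases lt_trichotomy k L with hk | hk | hk
    · rw [hgl k (by omega), hgl (k+1) (by omega)]
      exact Q.adj_getVert_succ hk
    · rw [hk, hgL, hgr (L+1) (by omega)]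
      have : L + 1 - L = 1 := by omega
      rw [this]
      exact (hfadj k₀ : G.Adj _ _ ∧ _).1
    · rw [hgr k hk, hgr (k+1) (by omega)]
      have harith : k₀ + (k + 1 - L) = k₀ + (k - L) + 1 := by omega
      rw [harith]
      exact (hfadj (k₀ + (k - L)) : G.Adj _ _ ∧ _).1
  have hgsup : ∀ k, k ≤ L → g k ∈ P.support := by
    intro k hk
    rw [hgl k hk]
    exact hQsup _ (myGetVert_mem_support Q k)
  have hgopen : ∀ k, L < k → ω (g k) = true := by
    intro k hk
    rw [hgr k hk]
    exact hopen _
  have hginj : Function.Injective g := by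
    have hnotin : ∀ k, L < k → g k ∉ P.support := by
      intro k hk hmem
      rw [hgr k hk] at hmem
      have := hk₀max _ hmem
      omega
    intro a b hab
    rcases le_or_gt a L with ha | ha <;> rcases le_or_gt b L with hb | hb
    · rw [hgl a ha, hgl b hb] at hab
      exact myGetVert_injOn hQpath (by exact ha) (by exact hb) hab
    · exact absurd (hab ▸ hgsup a ha) (hnotin b hb)
    · exact absurd (hab ▸ hgsup b hb) (hnotin a ha)
    · rw [hgr a ha, hgr b hb] at hab
      have := hfinj hab
      omega
  -- the finitely many cut-sets meeting P.support
  have hbad : {m : ℕ | ∃ x ∈ P.support, x ∈ C m}.Finite := by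
    have hsub : {m : ℕ | ∃ x ∈ P.support, x ∈ C m} ⊆
        ⋃ x ∈ {x | x ∈ P.support}, {m : ℕ | x ∈ C m} := by
      rintro m ⟨x, hx1, hx2⟩
      exact Set.mem_biUnion hx1 hx2
    refine Set.Finite.subset (Set.Finite.biUnion P.support.finite_toSet ?_) hsub
    intro x _
    refine Set.Subsingleton.finite ?_
    intro m hm m' hm'
    by_contra hne
    exact Set.not_disjoint_iff.2 ⟨x, hm, hm'⟩ (Finset.disjoint_coe.2 (hdisj hne))
  obtain ⟨N, hN⟩ := hbad.bddAbove
  obtain ⟨i, hiN, hiF⟩ : ∃ i, N + 1 ≤ i ∧ ω ∈ Fc i := by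
    have := hlim (N + 1)
    obtain ⟨i, hi⟩ := this
    obtain ⟨hge, hmem⟩ := hi
    exact ⟨i, hge, hmem⟩
  obtain ⟨k, hk⟩ := hcut i g hginj hg0 hgadj
  rcases le_or_gt k L with hkL | hkL
  · have : i ∈ {m : ℕ | ∃ x ∈ P.support, x ∈ C m} := ⟨g k, hgsup k hkL, hk⟩
    have := hN this
    omega
  · have h1 : ω (g k) = true := hgopen k hkL
    have h2 : ω (g k) = false := hiF (g k) hk
    rw [h1] at h2
    simp at h2
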